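/- Let h ∈ ℝ and q ∈ ℂ satisfy h² ≠ |q|², set D = h² − |q|², and define a = h / (2·(D²)^{1/3}) and b = −q / (2·(D²)^{1/3}). Then a² ≠ |b|², and the formulas invert: h = a / (8·(a² − |b|²)²) and q = −b / (8·(a² − |b|²)²). Moreover a > |b| if and only if h > |q|, a < −|b| if and only if h < −|q|, and |a| < |b| if and only if |h| < |q|. -/

import Mathlib

/-- The formulas `a = h/(2(h²−|q|²)^{2/3})`, `b = −q/(2(h²−|q|²)^{2/3})` (where
`x^{2/3}` means `(x²)^{1/3}`) satisfy `a² ≠ |b|²`, invert as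
`h = a/(8(a²−|b|²)²)`, `q = −b/(8(a²−|b|²)²)`, and carry each sector
`h > |q|`, `h < −|q|`, `|h| < |q|` to the corresponding sector in `(a,b)`. -/
theorem invariants_invert (h : ℝ) (q : ℂ) (hne : h ^ 2 ≠ ‖q‖ ^ 2)
    (a : ℝ) (b : ℂ)
    (ha : a = h / (2 * ((h ^ 2 - ‖q‖ ^ 2) ^ 2) ^ ((1 : ℝ) / 3)))
    (hb : b = -q / ((2 * ((h ^ 2 - ‖q‖ ^ 2) ^ 2) ^ ((1 : ℝ) / 3) : ℝ) : ℂ)) :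
    a ^ 2 ≠ ‖b‖ ^ 2 ∧
    h = a / (8 * (a ^ 2 - ‖b‖ ^ 2) ^ 2) ∧
    q = -b / ((8 * (a ^ 2 - ‖b‖ ^ 2) ^ 2 : ℝ) : ℂ) ∧
    (a > ‖b‖ ↔ h > ‖q‖) ∧
    (a < -‖b‖ ↔ h < -‖q‖) ∧
    (|a| < ‖b‖ ↔ |h| < ‖q‖) := by
  have hDne : h ^ 2 - ‖q‖ ^ 2 ≠ 0 := sub_ne_zero.mpr hne
  have hD2 : (0:ℝ) < (h ^ 2 - ‖q‖ ^ 2) ^ 2 := by positivity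
  set t : ℝ := ((h ^ 2 - ‖q‖ ^ 2) ^ 2) ^ ((1:ℝ)/3) with ht
  have htpos : 0 < t := Real.rpow_pos_of_pos hD2 _
  have ht3 : t ^ 3 = (h ^ 2 - ‖q‖ ^ 2) ^ 2 := by
    rw [ht, ← Real.rpow_natCast (((h ^ 2 - ‖q‖ ^ 2) ^ 2) ^ ((1:ℝ)/3)) 3,
      ← Real.rpow_mul hD2.le]
    norm_num
  have hbnorm : ‖b‖ = ‖q‖ / (2 * t) := by
    rw [hb, norm_div, norm_neg, Complex.norm_real]
    congr 1
    exact abs_of_pos (by positivity)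
  have key : a ^ 2 - ‖b‖ ^ 2 = (h ^ 2 - ‖q‖ ^ 2) / (4 * t ^ 2) := by
    rw [ha, hbnorm, div_pow, div_pow, div_sub_div_same]
    rw [show (2*t)^2 = 4*t^2 by ring]
  have keyne : a ^ 2 - ‖b‖ ^ 2 ≠ 0 := by
    rw [key]
    exact div_ne_zero hDne (by positivity)
  have key8 : 8 * (a ^ 2 - ‖b‖ ^ 2) ^ 2 = 1 / (2 * t) := by
    rw [key, div_pow, eq_div_iff (by positivity : (2*t:ℝ) ≠ 0)]
    have htne : t ≠ 0 := htpos.ne'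
    field_simp
    linear_combination (-16) * ht3
  refine ⟨fun hc => keyne (by rw [hc]; ring), ?_, ?_, ?_, ?_, ?_⟩
  · rw [key8, ha]
    field_simp
  · rw [key8, hb]
    have h2t : ((2 * t : ℝ) : ℂ) ≠ 0 := by
      exact_mod_cast (by positivity : (2*t:ℝ) ≠ 0)
    push_cast at h2t ⊢
    field_simp
    exact (mul_div_cancel_right₀ q (by exact_mod_cast htpos.ne' : (t:ℂ) ≠ 0)).symm
  · rw [ha, hbnorm]
    exact div_lt_div_iff_of_pos_right (by positivity)
  · rw [ha, hbnorm, ← neg_div]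
    exact div_lt_div_iff_of_pos_right (by positivity)
  · rw [ha, hbnorm, abs_div, abs_of_pos (by positivity : (0:ℝ) < 2*t)]
    exact div_lt_div_iff_of_pos_right (by positivity)
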